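/- Let G be a topological group. Suppose there exists ε ∈ (0,1) such that for every finite subset E ⊆ G and every right-invariant continuous pseudo-metric d on G there is a finitely supported a : G → ℝ with a ≥ 0, ∑ a = 1, and |∑_x a(x)f(x) − ∑_x a(g⁻¹x)f(x)| ≤ ε for all g ∈ E and all 1-Lipschitz f : (G,d) → [0,1]. Then the same conclusion holds for every ε' > 0 in place of ε, and consequently G is amenable. -/

import Mathlib

/-- Bounded right-uniformly continuous real functions on a topological group. -/
def RUCb (G : Type*) [Group G] [TopologicalSpace G] : Set (G → ℝ) :=
  {f | (∃ C, ∀ x, |f x| ≤ C) ∧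
    ∀ ε > (0:ℝ), ∃ U ∈ nhds (1 : G), ∀ x y : G, x * y⁻¹ ∈ U → |f x - f y| ≤ ε}

/-- A mean on a set `D` of real functions on `X`: positive, normalized, linear on `D`. -/
def IsMeanOn (X : Type*) (D : Set (X → ℝ)) (m : (X → ℝ) → ℝ) : Prop :=
  m (fun _ => 1) = 1 ∧
  (∀ f ∈ D, ∀ g ∈ D, m (f + g) = m f + m g) ∧
  (∀ (c : ℝ), ∀ f ∈ D, m (c • f) = c * m f) ∧
  (∀ f ∈ D, (∀ x, 0 ≤ f x) → 0 ≤ m f)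

/-- A topological group is amenable if `RUC_b(G)` admits a left-invariant mean. -/
def TopAmenable (G : Type*) [Group G] [TopologicalSpace G] : Prop :=
  ∃ m : (G → ℝ) → ℝ, IsMeanOn G (RUCb G) m ∧
    ∀ f ∈ RUCb G, ∀ g : G, m (fun x => f (g * x)) = m f

/-- A pseudo-metric. -/
structure IsPseudoMetric {G : Type*} (d : G → G → ℝ) : Prop where
  refl : ∀ x, d x x = 0
  symm : ∀ x y, d x y = d y x
  triangle : ∀ x y z, d x z ≤ d x y + d y z

set_option linter.unusedSectionVars false
namespace Stmt8
open Finsupp Filter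

attribute [local instance] Classical.propDecidable

variable {G : Type*} [Group G] [TopologicalSpace G] [IsTopologicalGroup G]

def RInv (d : G → G → ℝ) : Prop := ∀ g x y : G, d (x * g) (y * g) = d x y
def OpenBalls (d : G → G → ℝ) : Prop := ∀ x : G, ∀ r > (0:ℝ), IsOpen {y : G | d x y < r}

def P (G : Type*) [Group G] [TopologicalSpace G] (ε : ℝ) : Prop :=
  ∀ E : Finset G, ∀ d : G → G → ℝ, IsPseudoMetric d → RInv d → OpenBalls d →
    ∃ a : G →₀ ℝ, (∀ x, 0 ≤ a x) ∧ a.sum (fun _ c => c) = 1 ∧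
      ∀ g ∈ E, ∀ f : G → ℝ, (∀ x y, |f x - f y| ≤ d x y) →
        (∀ x, f x ∈ Set.Icc (0:ℝ) 1) →
        |a.sum (fun x c => c * f x) -
          (Finsupp.mapDomain (fun x => g * x) a).sum (fun x c => c * f x)| ≤ ε

lemma pm_nonneg {d : G → G → ℝ} (hd : IsPseudoMetric d) (x y : G) : 0 ≤ d x y := by
  have h1 := hd.triangle x y x
  have h2 := hd.symm x y
  have h3 := hd.refl x
  linarith

lemma sum_pm {ι : Type*} (A : Finset ι) (D : ι → G → G → ℝ)
    (hpm : ∀ i ∈ A, IsPseudoMetric (D i)) :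
    IsPseudoMetric (fun x y => ∑ i ∈ A, D i x y) := by
  constructor
  · intro x; exact Finset.sum_eq_zero fun i hi => (hpm i hi).refl x
  · intro x y; exact Finset.sum_congr rfl fun i hi => (hpm i hi).symm x y
  · intro x y z
    rw [← Finset.sum_add_distrib]
    exact Finset.sum_le_sum fun i hi => (hpm i hi).triangle x y z

lemma sum_rinv {ι : Type*} (A : Finset ι) (D : ι → G → G → ℝ)
    (hri : ∀ i ∈ A, RInv (D i)) :
    RInv (fun x y => ∑ i ∈ A, D i x y) := by
  intro g x y; exact Finset.sum_congr rfl fun i hi => hri i hi g x y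

lemma sum_ob {ι : Type*} (A : Finset ι) (D : ι → G → G → ℝ)
    (hpm : ∀ i ∈ A, IsPseudoMetric (D i)) (hob : ∀ i ∈ A, OpenBalls (D i)) :
    OpenBalls (fun x y => ∑ i ∈ A, D i x y) := by
  intro x r _
  rw [isOpen_iff_mem_nhds]
  intro y hy
  simp only [Set.mem_setOf_eq] at hy
  set s : ℝ := ∑ i ∈ A, D i x y with hs
  set t : ℝ := (r - s) / (A.card + 1) with ht
  have hts : (0:ℝ) < r - s := by linarith [hy]
  have htpos : 0 < t := by positivity
  have hV : (⋂ i ∈ A, {z : G | D i y z < t}) ∈ nhds y := by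
    refine (Filter.biInter_mem A.finite_toSet).mpr fun i hi => ?_
    refine (hob i hi y t htpos).mem_nhds ?_
    simp [(hpm i hi).refl y, htpos]
  refine Filter.mem_of_superset hV ?_
  intro z hz
  simp only [Set.mem_iInter, Set.mem_setOf_eq] at hz ⊢
  have h1 : ∀ i ∈ A, D i x z ≤ D i x y + t := fun i hi =>
    (hpm i hi).triangle x y z |>.trans (by have := hz i hi; linarith)
  calc ∑ i ∈ A, D i x z ≤ ∑ i ∈ A, (D i x y + t) := Finset.sum_le_sum h1
    _ = s + A.card * t := by rw [Finset.sum_add_distrib]; simp [hs, mul_comm]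
    _ < r := by
        have : (A.card : ℝ) * t < r - s := by
          rw [ht]
          have hc : (A.card : ℝ) < A.card + 1 := by linarith
          have := (div_lt_one (by positivity : (0:ℝ) < (A.card:ℝ)+1)).mpr hc
          calc (A.card : ℝ) * ((r - s)/(A.card + 1)) = ((A.card : ℝ)/(A.card+1)) * (r-s) := by ring
            _ < 1 * (r - s) := by
                apply mul_lt_mul_of_pos_right this hts
            _ = r - s := one_mul _
        linarith

lemma mapDomain_mul_apply (g : G) (a : G →₀ ℝ) (z : G) :
    Finsupp.mapDomain (fun x => g * x) a z = a (g⁻¹ * z) := by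
  have h : (fun x => g * x) = ⇑(Equiv.mulLeft g) := rfl
  rw [h, Finsupp.mapDomain_equiv_apply]
  rfl

lemma sum_mapDomain_mul (g : G) (a : G →₀ ℝ) (f : G → ℝ) :
    (Finsupp.mapDomain (fun x => g * x) a).sum (fun x c => c * f x)
      = a.sum (fun x c => c * f (g * x)) := by
  refine Finsupp.sum_mapDomain_index (fun b => by ring) (fun b m1 m2 => by ring)

lemma sum_coords_mapDomain (g : G) (a : G →₀ ℝ) :
    (Finsupp.mapDomain (fun x => g * x) a).sum (fun _ c => c) = a.sum (fun _ c => c) :=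
  Finsupp.sum_mapDomain_index (fun _ => rfl) (fun _ _ _ => rfl)

lemma sum_affine (p q : ℝ) (φ : G → ℝ) (a : G →₀ ℝ) :
    a.sum (fun x c => c * (p * φ x + q))
      = p * a.sum (fun x c => c * φ x) + q * a.sum (fun _ c => c) := by
  rw [Finsupp.sum, Finsupp.sum, Finsupp.sum, Finset.mul_sum, Finset.mul_sum,
    ← Finset.sum_add_distrib]
  exact Finset.sum_congr rfl fun x _ => by ring

lemma abs_sum_le {a : G →₀ ℝ} (ha0 : ∀ x, 0 ≤ a x) {φ : G → ℝ} {M : ℝ}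
    (hφ : ∀ x, |φ x| ≤ M) : |a.sum fun x c => c * φ x| ≤ M * a.sum (fun _ c => c) := by
  rw [Finsupp.sum, Finsupp.sum, Finset.mul_sum]
  refine (Finset.abs_sum_le_sum_abs _ _).trans (Finset.sum_le_sum fun x _ => ?_)
  rw [abs_mul, abs_of_nonneg (ha0 x)]
  calc a x * |φ x| ≤ a x * M := mul_le_mul_of_nonneg_left (hφ x) (ha0 x)
    _ = M * a x := mul_comm _ _

lemma sum_in_Icc {a : G →₀ ℝ} (ha0 : ∀ x, 0 ≤ a x) (ha1 : a.sum (fun _ c => c) = 1)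
    {φ : G → ℝ} (hφ : ∀ x, φ x ∈ Set.Icc (0:ℝ) 1) :
    (a.sum fun x c => c * φ x) ∈ Set.Icc (0:ℝ) 1 := by
  constructor
  · exact Finset.sum_nonneg fun x _ => mul_nonneg (ha0 x) (hφ x).1
  · calc (a.sum fun x c => c * φ x) ≤ a.sum fun _ c => c := by
          refine Finset.sum_le_sum fun x _ => ?_
          calc a x * φ x ≤ a x * 1 := mul_le_mul_of_nonneg_left (hφ x).2 (ha0 x)
            _ = a x := mul_one _
      _ = 1 := ha1


lemma sum_mul_one (b : G →₀ ℝ) :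
    b.sum (fun x cx => cx * (fun _ => (1:ℝ)) x) = b.sum (fun _ cx => cx) :=
  Finsupp.sum_congr fun x _ => mul_one _

lemma conv_pair (b b' : G →₀ ℝ) (φ : G → ℝ) :
    (b.sum fun y cy => cy • Finsupp.mapDomain (fun x => y * x) b').sum (fun x cx => cx * φ x)
      = b.sum (fun y cy => cy * b'.sum (fun x cx => cx * φ (y * x))) := by
  have h1 : ∀ (ψ : G → ℝ) (a : G →₀ ℝ),
      a.sum (fun x cx => cx * ψ x) = Finsupp.linearCombination ℝ ψ a := by
    intro ψ a
    rw [Finsupp.linearCombination_apply]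
    simp only [smul_eq_mul]
  rw [h1 φ, map_finsuppSum]
  refine Finsupp.sum_congr fun y _ => ?_
  rw [map_smul, smul_eq_mul, Finsupp.linearCombination_mapDomain,
    Finsupp.linearCombination_apply]
  simp only [smul_eq_mul, Function.comp]

lemma P_mono {ε₁ ε₂ : ℝ} (hle : ε₁ ≤ ε₂) (h : P G ε₁) : P G ε₂ := by
  intro E d pm ri ob
  obtain ⟨a, h0, h1, hE⟩ := h E d pm ri ob
  exact ⟨a, h0, h1, fun g hg f hf h01 => (hE g hg f hf h01).trans hle⟩

lemma P_square {ε : ℝ} (hε : 0 < ε) (hP : P G ε) : P G (ε ^ 2) := by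
  intro E d pm ri ob
  classical
  have hεinv : (0:ℝ) < 1 + ε⁻¹ := by positivity
  -- Step 1: scaled metric
  set d1 : G → G → ℝ := fun x y => (1 + ε⁻¹) * d x y with hd1
  have pm1 : IsPseudoMetric d1 := by
    constructor
    · intro x; simp [hd1, pm.refl]
    · intro x y; simp [hd1, pm.symm x y]
    · intro x y z
      simp only [hd1]
      rw [← mul_add]
      exact mul_le_mul_of_nonneg_left (pm.triangle x y z) hεinv.le
  have ri1 : RInv d1 := fun g x y => by simp [hd1, ri g x y]
  have ob1 : OpenBalls d1 := by
    intro x r hr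
    have : {y : G | d1 x y < r} = {y : G | d x y < r / (1 + ε⁻¹)} := by
      ext y; simp only [Set.mem_setOf_eq, hd1]
      rw [mul_comm, ← lt_div_iff₀ hεinv]
    rw [this]
    exact ob x _ (by positivity)
  obtain ⟨b, hb0, hb1, hbE⟩ := hP E d1 pm1 ri1 ob1
  -- the finite set S
  have hbne : b.support.Nonempty := by
    rw [Finset.nonempty_iff_ne_empty]
    intro hemp
    rw [Finsupp.sum, hemp] at hb1
    simp at hb1
  set S : Finset G := (insert 1 E).biUnion (fun g => b.support.image (fun x => g * x))
    with hS
  have hSsupp : b.support ⊆ S := by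
    intro x hx
    refine Finset.mem_biUnion.mpr ⟨1, Finset.mem_insert_self _ _, ?_⟩
    exact Finset.mem_image.mpr ⟨x, hx, one_mul x⟩
  have hSg : ∀ g ∈ E, ∀ x ∈ b.support, g * x ∈ S := by
    intro g hg x hx
    exact Finset.mem_biUnion.mpr ⟨g, Finset.mem_insert_of_mem hg,
      Finset.mem_image.mpr ⟨x, hx, rfl⟩⟩
  have hSne : S.Nonempty := hbne.mono hSsupp
  -- Step 2 data
  set E' : Finset G := S.biUnion (fun y => S.image (fun y' => y⁻¹ * y')) with hE'
  set d2 : G → G → ℝ := fun u v => ∑ y ∈ S, d (y * u) (y * v) with hd2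
  have pm2 : IsPseudoMetric d2 := by
    refine sum_pm S (fun y u v => d (y * u) (y * v)) fun y _ => ?_
    exact ⟨fun u => pm.refl _, fun u v => pm.symm _ _,
      fun u v w => pm.triangle _ _ _⟩
  have ri2 : RInv d2 := by
    refine sum_rinv S _ fun y _ => ?_
    intro g u v
    simp only [← mul_assoc]
    exact ri g (y * u) (y * v)
  have ob2 : OpenBalls d2 := by
    refine sum_ob S _ (fun y _ => ⟨fun u => pm.refl _, fun u v => pm.symm _ _,
      fun u v w => pm.triangle _ _ _⟩) fun y _ => ?_
    intro u r hr
    have : {v : G | d (y * u) (y * v) < r} = (fun v => y * v) ⁻¹' {w : G | d (y * u) w < r} := rfl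
    rw [this]
    exact (ob (y * u) r hr).preimage (continuous_const.mul continuous_id)
  obtain ⟨b', hb'0, hb'1, hb'E⟩ := hP E' d2 pm2 ri2 ob2
  -- the convolution
  set c : G →₀ ℝ := b.sum (fun y cy => cy • Finsupp.mapDomain (fun x => y * x) b') with hc
  have hc0 : ∀ x, 0 ≤ c x := by
    intro z
    rw [hc, Finsupp.sum_apply, Finsupp.sum]
    refine Finset.sum_nonneg fun y _ => ?_
    rw [Finsupp.smul_apply, smul_eq_mul, mapDomain_mul_apply]
    exact mul_nonneg (hb0 y) (hb'0 _)
  -- pairing with any function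
  have hpair : ∀ φ : G → ℝ, c.sum (fun x cx => cx * φ x)
      = b.sum (fun y cy => cy * b'.sum (fun x cx => cx * φ (y * x))) := by
    intro φ
    rw [hc]
    exact conv_pair b b' φ
  have hsum1 : b'.sum (fun x cx => cx * (fun _ => (1:ℝ)) x) = 1 :=
    (sum_mul_one b').trans hb'1
  have hc1 : c.sum (fun _ cx => cx) = 1 := by
    calc c.sum (fun _ cx => cx)
        = c.sum (fun x cx => cx * (fun _ => (1:ℝ)) x) := (sum_mul_one c).symm
      _ = b.sum (fun y cy => cy * b'.sum (fun x cx => cx * (fun _ => (1:ℝ)) (y * x))) :=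
          hpair _
      _ = b.sum (fun y cy => cy) := Finsupp.sum_congr fun y _ => by
          rw [show (fun x cx => cx * (fun _ => (1:ℝ)) (y * x)) = fun (x : G) (cx : ℝ) => cx * (fun _ => (1:ℝ)) x from rfl, hsum1, mul_one]
      _ = 1 := hb1
  refine ⟨c, hc0, hc1, ?_⟩
  intro g hg f hf hf01
  -- define F
  set F : G → ℝ := fun y => b'.sum (fun x cx => cx * f (y * x)) with hF
  have hFpair : c.sum (fun x cx => cx * f x) = b.sum (fun y cy => cy * F y) := hpair f
  have hFpair2 : (Finsupp.mapDomain (fun x => g * x) c).sum (fun x cx => cx * f x)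
      = (Finsupp.mapDomain (fun x => g * x) b).sum (fun y cy => cy * F y) := by
    rw [sum_mapDomain_mul, sum_mapDomain_mul, hpair (fun x => f (g * x))]
    refine Finsupp.sum_congr fun y _ => ?_
    congr 1
    simp only [hF]
    exact Finsupp.sum_congr fun x _ => by rw [mul_assoc]
  -- F is 1-Lipschitz wrt d
  have hFlip : ∀ y y' : G, |F y - F y'| ≤ d y y' := by
    intro y y'
    have hsub : F y - F y' = b'.sum (fun x cx => cx * (f (y * x) - f (y' * x))) := by
      simp only [hF, Finsupp.sum, ← Finset.sum_sub_distrib]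
      exact Finset.sum_congr rfl fun x _ => by ring
    rw [hsub]
    have := abs_sum_le hb'0 (φ := fun x => f (y * x) - f (y' * x)) (M := d y y') ?_
    · rw [hb'1, mul_one] at this; exact this
    · intro x
      calc |f (y * x) - f (y' * x)| ≤ d (y * x) (y' * x) := hf _ _
        _ = d y y' := ri x y y'
  -- oscillation of F on S is ≤ ε
  have hosc : ∀ y ∈ S, ∀ y' ∈ S, |F y' - F y| ≤ ε := by
    intro y hy y' hy'
    have hmem : y'⁻¹ * y ∈ E' := Finset.mem_biUnion.mpr ⟨y', hy',
      Finset.mem_image.mpr ⟨y, hy, rfl⟩⟩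
    have hφlip : ∀ u v : G, |f (y' * u) - f (y' * v)| ≤ d2 u v := by
      intro u v
      calc |f (y' * u) - f (y' * v)| ≤ d (y' * u) (y' * v) := hf _ _
        _ ≤ d2 u v := Finset.single_le_sum (f := fun w => d (w * u) (w * v))
            (fun w _ => pm_nonneg pm _ _) hy'
    have := hb'E (y'⁻¹ * y) hmem (fun z => f (y' * z)) hφlip (fun z => hf01 _)
    rw [sum_mapDomain_mul] at this
    have e1 : b'.sum (fun x cx => cx * f (y' * x)) = F y' := rfl
    have e2 : b'.sum (fun x cx => cx * f (y' * (y'⁻¹ * y * x))) = F y := by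
      refine Finsupp.sum_congr fun x _ => ?_
      congr 2
      group
    rw [e1, e2] at this
    exact this
  -- midpoint and clipped function
  set κ : ℝ := (S.sup' hSne F + S.inf' hSne F) / 2 with hκ
  have hκbound : ∀ y ∈ S, |F y - κ| ≤ ε / 2 := by
    obtain ⟨ymax, hymax, hmax⟩ := Finset.exists_mem_eq_sup' hSne F
    obtain ⟨ymin, hymin, hmin⟩ := Finset.exists_mem_eq_inf' hSne F
    have hwid : S.sup' hSne F - S.inf' hSne F ≤ ε := by
      rw [hmax, hmin]
      exact (le_abs_self _).trans (hosc ymin hymin ymax hymax)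
    intro y hy
    have h1 : F y ≤ S.sup' hSne F := Finset.le_sup' F hy
    have h2 : S.inf' hSne F ≤ F y := Finset.inf'_le F hy
    rw [abs_le]
    constructor <;> [skip; skip] <;> simp only [hκ] <;> linarith
  set Gf : G → ℝ := fun z => max 0 (min 1 ((F z - κ) / ε + 1 / 2)) with hGf
  have hG01 : ∀ z, Gf z ∈ Set.Icc (0:ℝ) 1 := by
    intro z
    refine ⟨le_max_left _ _, max_le (by norm_num) (min_le_left _ _)⟩
  have hGlip : ∀ u v, |Gf u - Gf v| ≤ d1 u v := by
    intro u v
    have step1 : |Gf u - Gf v| ≤ |min 1 ((F u - κ) / ε + 1 / 2) - min 1 ((F v - κ) / ε + 1 / 2)| := by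
      simp only [hGf]
      rw [max_comm 0 _, max_comm 0 (min 1 ((F v - κ) / ε + 1 / 2))]
      exact abs_max_sub_max_le_abs _ _ _
    have step2 : |min 1 ((F u - κ) / ε + 1 / 2) - min 1 ((F v - κ) / ε + 1 / 2)|
        ≤ |((F u - κ) / ε + 1 / 2) - ((F v - κ) / ε + 1 / 2)| := by
      refine (abs_min_sub_min_le_max 1 _ 1 _).trans ?_
      simp [abs_nonneg]
    have step3 : |((F u - κ) / ε + 1 / 2) - ((F v - κ) / ε + 1 / 2)| = |F u - F v| / ε := by
      rw [show ((F u - κ) / ε + 1 / 2) - ((F v - κ) / ε + 1 / 2) = (F u - F v) / ε by ring,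
        abs_div, abs_of_pos hε]
    have step4 : |F u - F v| / ε ≤ d1 u v := by
      have h5 := hFlip u v
      have h6 : (0:ℝ) ≤ d u v := pm_nonneg pm u v
      have h7 : |F u - F v| / ε ≤ d u v / ε := by gcongr
      have h8 : d u v / ε = ε⁻¹ * d u v := div_eq_inv_mul _ _
      simp only [hd1]
      nlinarith [h7, h8]
    exact step1.trans (step2.trans (step3 ▸ step4))
  have hGS : ∀ y ∈ S, F y = ε * Gf y + (κ - ε / 2) := by
    intro y hy
    have h1 := hκbound y hy
    rw [abs_le] at h1
    have e1 : -(1/2 : ℝ) ≤ (F y - κ) / ε := by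
      rw [le_div_iff₀ hε]; linarith [h1.1]
    have e2 : (F y - κ) / ε ≤ 1/2 := by
      rw [div_le_iff₀ hε]; linarith [h1.2]
    have hmin : min 1 ((F y - κ)/ε + 1/2) = (F y - κ)/ε + 1/2 := min_eq_right (by linarith)
    have hmax : Gf y = (F y - κ)/ε + 1/2 := by
      simp only [hGf]; rw [hmin]; exact max_eq_right (by linarith)
    rw [hmax]
    field_simp
    ring
  have hsplit : ∀ a : G →₀ ℝ, (∀ x ∈ a.support, x ∈ S) →
      a.sum (fun y cy => cy * F y)
        = ε * a.sum (fun y cy => cy * Gf y) + (κ - ε/2) * a.sum (fun _ cy => cy) := by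
    intro a hsup
    rw [← sum_affine]
    exact Finsupp.sum_congr fun y hy => by rw [← hGS y (hsup y hy)]
  have supb : ∀ x ∈ b.support, x ∈ S := fun x hx => hSsupp hx
  have supgb : ∀ x ∈ (Finsupp.mapDomain (fun x => g * x) b).support, x ∈ S := by
    intro x hx
    obtain ⟨w, hw, rfl⟩ := Finset.mem_image.mp (Finsupp.mapDomain_support hx)
    exact hSg g hg w hw
  have hsumgb : (Finsupp.mapDomain (fun x => g * x) b).sum (fun _ c => c) = 1 := by
    rw [sum_coords_mapDomain, hb1]
  have hGest := hbE g hg Gf hGlip hG01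
  rw [hFpair, hFpair2, hsplit b supb, hsplit _ supgb, hb1, hsumgb]
  have hring : ε * (b.sum fun y cy => cy * Gf y) + (κ - ε/2) * 1 -
      (ε * ((Finsupp.mapDomain (fun x => g * x) b).sum fun y cy => cy * Gf y) + (κ - ε/2) * 1)
      = ε * ((b.sum fun y cy => cy * Gf y)
          - ((Finsupp.mapDomain (fun x => g * x) b).sum fun y cy => cy * Gf y)) := by ring
  rw [hring, abs_mul, abs_of_pos hε, pow_two]
  exact mul_le_mul_of_nonneg_left hGest hε.le

lemma P_all {ε : ℝ} (hε : ε ∈ Set.Ioo (0:ℝ) 1) (h : P G ε) : ∀ ε' > (0:ℝ), P G ε' := by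
  have key : ∀ k : ℕ, P G (ε ^ 2 ^ k) := by
    intro k
    induction k with
    | zero => simpa using h
    | succ k ih =>
        have h2 := P_square (pow_pos hε.1 _) ih
        have : ε ^ 2 ^ (k + 1) = (ε ^ 2 ^ k) ^ 2 := by
          rw [← pow_mul, ← pow_succ]
        rwa [this]
  intro ε' hε'
  obtain ⟨n, hn⟩ := exists_pow_lt_of_lt_one hε' hε.2
  have h2 : ε ^ 2 ^ n ≤ ε ^ n :=
    pow_le_pow_of_le_one hε.1.le hε.2.le (Nat.lt_two_pow_self (n := n)).le
  exact P_mono (h2.trans hn.le) (key n)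

section Part2

def NF (G : Type*) [Group G] [TopologicalSpace G] : Type _ :=
  {u : G → ℝ // (∀ x, u x ∈ Set.Icc (0:ℝ) 1) ∧
    ∀ δ > (0:ℝ), ∃ U ∈ nhds (1 : G), ∀ x y : G, x * y⁻¹ ∈ U → |u x - u y| ≤ δ}

noncomputable def du (u : NF G) : G → G → ℝ :=
  fun x y => ⨆ g : G, |u.1 (x * g) - u.1 (y * g)|

lemma du_bdd (u : NF G) (x y : G) :
    BddAbove (Set.range fun g => |u.1 (x * g) - u.1 (y * g)|) := by
  refine ⟨1, ?_⟩
  rintro _ ⟨g, rfl⟩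
  have h1 := u.2.1 (x * g)
  have h2 := u.2.1 (y * g)
  rw [abs_le]
  exact ⟨by linarith [h1.1, h2.2], by linarith [h1.2, h2.1]⟩

lemma le_du (u : NF G) (x y g : G) : |u.1 (x * g) - u.1 (y * g)| ≤ du u x y :=
  le_ciSup (du_bdd u x y) g

lemma du_le (u : NF G) {x y : G} {M : ℝ}
    (h : ∀ g, |u.1 (x * g) - u.1 (y * g)| ≤ M) : du u x y ≤ M := by
  haveI : Nonempty G := ⟨1⟩
  exact ciSup_le h

lemma du_lip (u : NF G) (x y : G) : |u.1 x - u.1 y| ≤ du u x y := by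
  simpa using le_du u x y 1

lemma du_nonneg (u : NF G) (x y : G) : 0 ≤ du u x y :=
  (abs_nonneg _).trans (le_du u x y 1)

lemma du_pm (u : NF G) : IsPseudoMetric (du u) := by
  constructor
  · intro x
    refine le_antisymm (du_le u fun g => by simp) (du_nonneg u x x)
  · intro x y
    refine le_antisymm (du_le u fun g => ?_) (du_le u fun g => ?_)
    · rw [abs_sub_comm]; exact le_du u y x g
    · rw [abs_sub_comm]; exact le_du u x y g
  · intro x y z
    refine du_le u fun g => ?_
    exact (abs_sub_le _ _ _).trans (add_le_add (le_du u x y g) (le_du u y z g))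

lemma du_rinv (u : NF G) : RInv (du u) := by
  intro h x y
  refine le_antisymm (du_le u fun g => ?_) (du_le u fun g => ?_)
  · rw [mul_assoc, mul_assoc]
    exact le_du u x y (h * g)
  · have := le_du u (x * h) (y * h) (h⁻¹ * g)
    simpa [mul_assoc] using this

lemma du_ob (u : NF G) : OpenBalls (du u) := by
  intro x r _
  rw [isOpen_iff_mem_nhds]
  intro y hy
  simp only [Set.mem_setOf_eq] at hy
  obtain ⟨U', hU', hU'2⟩ := u.2.2 ((r - du u x y) / 2) (by linarith)
  have hpre : (fun z => z * y⁻¹) ⁻¹' U' ∈ nhds y := by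
    refine ContinuousAt.preimage_mem_nhds (Continuous.continuousAt ?_) ?_
    · exact continuous_mul_right y⁻¹
    · simpa using hU'
  refine Filter.mem_of_superset hpre ?_
  intro z hz
  simp only [Set.mem_preimage] at hz
  have hdyz : du u y z ≤ (r - du u x y) / 2 := by
    refine du_le u fun g => ?_
    have hmem : (z * g) * (y * g)⁻¹ ∈ U' := by
      have : (z * g) * (y * g)⁻¹ = z * y⁻¹ := by group
      rw [this]; exact hz
    have := hU'2 (z * g) (y * g) hmem
    rwa [abs_sub_comm]
  have htri := (du_pm u).triangle x y z
  simp only [Set.mem_setOf_eq]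
  linarith

lemma du_dominates {u : NF G} {A : Finset (NF G)} (hu : u ∈ A) (x y : G) :
    du u x y ≤ ∑ v ∈ A, du v x y :=
  Finset.single_le_sum (f := fun v => du v x y) (fun v _ => du_nonneg v x y) hu

lemma amenable (hP : ∀ ε' > (0:ℝ), P G ε') : TopAmenable G := by
  classical
  let J := Finset G × Finset (NF G) × ℕ
  haveI : Nonempty J := ⟨(∅, ∅, 0)⟩
  haveI hNB : (Filter.atTop : Filter J).NeBot := Filter.atTop_neBot
  have hch : ∀ j : J, ∃ a : G →₀ ℝ, (∀ x, 0 ≤ a x) ∧ a.sum (fun _ c => c) = 1 ∧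
      ∀ g ∈ j.1, ∀ u ∈ j.2.1,
        |a.sum (fun x c => c * u.1 x) -
          (Finsupp.mapDomain (fun x => g * x) a).sum (fun x c => c * u.1 x)|
          ≤ 1 / (j.2.2 + 1) := by
    intro j
    have hpm : ∀ v ∈ j.2.1, IsPseudoMetric (du v) := fun v _ => du_pm v
    obtain ⟨a, h0, h1, hE⟩ := hP (1 / (j.2.2 + 1)) (by positivity) j.1
      (fun x y => ∑ v ∈ j.2.1, du v x y)
      (sum_pm _ _ hpm) (sum_rinv _ _ fun v _ => du_rinv v)
      (sum_ob _ _ hpm fun v _ => du_ob v)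
    exact ⟨a, h0, h1, fun g hg u hu =>
      hE g hg u.1 (fun x y => (du_lip u x y).trans (du_dominates hu x y)) u.2.1⟩
  choose a ha0 ha1 haE using hch
  set U : Ultrafilter J := Ultrafilter.of Filter.atTop with hUdef
  set φ : (G → ℝ) → J → ℝ := fun f j => (a j).sum (fun x c => c * f x) with hφ
  set m : (G → ℝ) → ℝ := fun f => limUnder (U : Filter J) (φ f) with hm
  have hmeq : ∀ (ψ : G → ℝ) (L : ℝ),
      Filter.Tendsto (φ ψ) (U : Filter J) (nhds L) → m ψ = L := by
    intro ψ L ht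
    rw [hm]
    exact ht.limUnder_eq
  have habs : ∀ (f : G → ℝ) (C : ℝ), (∀ x, |f x| ≤ C) → ∀ j, |φ f j| ≤ C := by
    intro f C hC j
    have := abs_sum_le (ha0 j) (φ := f) (M := C) hC
    rwa [ha1 j, mul_one] at this
  have htend : ∀ f : G → ℝ, (∃ C, ∀ x, |f x| ≤ C) →
      Filter.Tendsto (φ f) (U : Filter J) (nhds (m f)) := by
    rintro f ⟨C, hC⟩
    obtain ⟨L, _, hL⟩ := (isCompact_Icc (a := -C) (b := C)).ultrafilter_le_nhds
      (U.map (φ f)) (by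
        rw [Ultrafilter.coe_map, Filter.le_principal_iff]
        exact Filter.mem_map.mpr (Filter.univ_mem'
          fun j => abs_le.mp (habs f C hC j)))
    have ht : Filter.Tendsto (φ f) (U : Filter J) (nhds L) := by
      rwa [Ultrafilter.coe_map] at hL
    have : m f = L := hmeq f L ht
    rwa [this]
  have hm1 : m (fun _ => 1) = 1 := by
    refine hmeq _ _ ?_
    have hφ1 : φ (fun _ => (1:ℝ)) = fun _ => (1:ℝ) := by
      funext j
      exact (sum_mul_one (a j)).trans (ha1 j)
    rw [hφ1]
    exact tendsto_const_nhds
  have hadd : ∀ f ∈ RUCb G, ∀ g' ∈ RUCb G, m (f + g') = m f + m g' := by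
    intro f hf g' hg'
    have t1 := htend f hf.1
    have t2 := htend g' hg'.1
    refine hmeq _ _ ?_
    have hsum : φ (f + g') = fun j => φ f j + φ g' j := by
      funext j
      simp only [hφ]
      rw [Finsupp.sum, Finsupp.sum, Finsupp.sum, ← Finset.sum_add_distrib]
      exact Finset.sum_congr rfl fun x _ => by simp [mul_add]
    rw [hsum]
    exact t1.add t2
  have hsmul : ∀ (cc : ℝ), ∀ f ∈ RUCb G, m (cc • f) = cc * m f := by
    intro cc f hf
    have t1 := htend f hf.1
    refine hmeq _ _ ?_
    have hsc : φ (cc • f) = fun j => cc * φ f j := by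
      funext j
      simp only [hφ]
      rw [Finsupp.sum, Finsupp.sum, Finset.mul_sum]
      refine Finset.sum_congr rfl fun x _ => ?_
      simp only [Pi.smul_apply, smul_eq_mul]
      ring
    rw [hsc]
    exact t1.const_mul cc
  have hpos : ∀ f ∈ RUCb G, (∀ x, 0 ≤ f x) → 0 ≤ m f := by
    intro f hf hf0
    refine ge_of_tendsto (htend f hf.1) (Filter.Eventually.of_forall fun j => ?_)
    exact Finset.sum_nonneg fun x _ => mul_nonneg (ha0 j x) (hf0 x)
  have hinv : ∀ f ∈ RUCb G, ∀ g : G, m (fun x => f (g * x)) = m f := by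
    intro f hf g
    obtain ⟨C, hC⟩ := hf.1
    set C' : ℝ := |C| + 1 with hC'
    have hC'pos : (0:ℝ) < C' := by positivity
    have hfC' : ∀ x, |f x| ≤ |C| := fun x => (hC x).trans (le_abs_self C)
    have hu01 : ∀ x, (f x + C') / (2 * C') ∈ Set.Icc (0:ℝ) 1 := by
      intro x
      have h1 := abs_le.mp (hfC' x)
      constructor
      · apply div_nonneg (by rw [hC']; linarith [h1.1]) (by linarith)
      · rw [div_le_one (by linarith)]
        rw [hC']; linarith [h1.2]
    have humod : ∀ δ > (0:ℝ), ∃ U' ∈ nhds (1 : G), ∀ x y : G, x * y⁻¹ ∈ U' →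
        |(f x + C') / (2 * C') - (f y + C') / (2 * C')| ≤ δ := by
      intro δ hδ
      obtain ⟨U', hU', hU'2⟩ := hf.2 (δ * (2 * C')) (by positivity)
      refine ⟨U', hU', fun x y hxy => ?_⟩
      rw [div_sub_div_same, show f x + C' - (f y + C') = f x - f y by ring,
        abs_div, abs_of_pos (by linarith : (0:ℝ) < 2 * C'),
        div_le_iff₀ (by linarith : (0:ℝ) < 2 * C')]
      exact hU'2 x y hxy
    set u : NF G := ⟨fun x => (f x + C') / (2 * C'), hu01, humod⟩ with hu
    have hfeq : ∀ x, f x = 2 * C' * u.1 x + (-C') := by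
      intro x
      simp only [hu]
      field_simp
      ring
    have t1 := htend (fun x => f (g * x)) ⟨C, fun x => hC (g * x)⟩
    have t2 := htend f ⟨C, hC⟩
    have key : ∀ N : ℕ, |m (fun x => f (g * x)) - m f| ≤ 2 * C' * (1 / ((N:ℝ) + 1)) := by
      intro N
      have hEv : ∀ᶠ j in (U : Filter J),
          |φ (fun x => f (g * x)) j - φ f j| ≤ 2 * C' * (1 / ((N:ℝ) + 1)) := by
        have hEv0 : ∀ᶠ j in (Filter.atTop : Filter J), ({g}, {u}, N) ≤ j :=
          Filter.eventually_ge_atTop _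
        refine (hEv0.filter_mono (Ultrafilter.of_le _)).mono fun j hj => ?_
        obtain ⟨hj1, hj2, hj3⟩ := hj
        have hgE : g ∈ j.1 := hj1 (Finset.mem_singleton_self g)
        have huS : u ∈ j.2.1 := hj2 (Finset.mem_singleton_self u)
        have hb := haE j g hgE u huS
        have e0 : ∀ b : G →₀ ℝ, b.sum (fun _ c => c) = 1 →
            b.sum (fun x c => c * f x)
              = 2 * C' * b.sum (fun x c => c * u.1 x) + (-C') := by
          intro b hb1
          calc b.sum (fun x c => c * f x)
              = b.sum (fun x c => c * (2 * C' * u.1 x + (-C'))) :=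
                Finsupp.sum_congr fun x _ => by rw [← hfeq x]
            _ = 2 * C' * b.sum (fun x c => c * u.1 x) + (-C') * b.sum (fun _ c => c) :=
                sum_affine _ _ _ _
            _ = 2 * C' * b.sum (fun x c => c * u.1 x) + (-C') := by rw [hb1, mul_one]
        have hφf : φ f j = 2 * C' * (a j).sum (fun x c => c * u.1 x) + (-C') := e0 _ (ha1 j)
        have hmd1 : (Finsupp.mapDomain (fun x => g * x) (a j)).sum (fun _ c => c) = 1 := by
          rw [sum_coords_mapDomain, ha1 j]
        have hφfg : φ (fun x => f (g * x)) j
            = 2 * C' * (Finsupp.mapDomain (fun x => g * x) (a j)).sum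
                (fun x c => c * u.1 x) + (-C') := by
          have h3 := e0 (Finsupp.mapDomain (fun x => g * x) (a j)) hmd1
          rw [sum_mapDomain_mul] at h3
          exact h3
        rw [hφf, hφfg]
        have hrw : (2 * C' * ((Finsupp.mapDomain (fun x => g * x) (a j)).sum
              (fun x c => c * u.1 x)) + (-C'))
            - (2 * C' * ((a j).sum (fun x c => c * u.1 x)) + (-C'))
            = 2 * C' * (((Finsupp.mapDomain (fun x => g * x) (a j)).sum
              (fun x c => c * u.1 x)) - ((a j).sum (fun x c => c * u.1 x))) := by ring
        rw [hrw, abs_mul, abs_of_pos (by linarith : (0:ℝ) < 2 * C')]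
        refine mul_le_mul_of_nonneg_left ?_ (by linarith)
        rw [abs_sub_comm]
        refine hb.trans ?_
        refine one_div_le_one_div_of_le (by positivity) ?_
        have : (N:ℝ) ≤ (j.2.2 : ℝ) := by exact_mod_cast hj3
        linarith
      have habs2 : Filter.Tendsto (fun j => |φ (fun x => f (g * x)) j - φ f j|)
          (U : Filter J) (nhds |m (fun x => f (g * x)) - m f|) := (t1.sub t2).abs
      exact le_of_tendsto habs2 hEv
    have hlim : Filter.Tendsto (fun N : ℕ => 2 * C' * (1 / ((N:ℝ) + 1)))
        Filter.atTop (nhds 0) := by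
      have h4 := tendsto_one_div_add_atTop_nhds_zero_nat (𝕜 := ℝ)
      have := h4.const_mul (2 * C')
      simpa using this
    have h0 : |m (fun x => f (g * x)) - m f| ≤ 0 :=
      ge_of_tendsto hlim (Filter.Eventually.of_forall key)
    have h5 : |m (fun x => f (g * x)) - m f| = 0 :=
      le_antisymm h0 (abs_nonneg _)
    exact sub_eq_zero.mp (abs_eq_zero.mp h5)
  exact ⟨m, ⟨hm1, hadd, hsmul, hpos⟩, hinv⟩

end Part2

end Stmt8

/-- If for some fixed `ε ∈ (0,1)` one can always find almost invariant normalized positive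
finitely supported functions (tested against 1-Lipschitz functions into `[0,1]`), then the
same holds for every `ε' > 0`, and consequently `G` is amenable. -/
theorem stmt_8 (G : Type*) [Group G] [TopologicalSpace G] [IsTopologicalGroup G]
    (ε : ℝ) (hε : ε ∈ Set.Ioo (0:ℝ) 1)
    (h : ∀ E : Finset G, ∀ d : G → G → ℝ, IsPseudoMetric d →
      (∀ g x y : G, d (x * g) (y * g) = d x y) →
      (∀ x : G, ∀ r > (0:ℝ), IsOpen {y : G | d x y < r}) →
      ∃ a : G →₀ ℝ, (∀ x, 0 ≤ a x) ∧ a.sum (fun _ c => c) = 1 ∧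
        ∀ g ∈ E, ∀ f : G → ℝ, (∀ x y, |f x - f y| ≤ d x y) →
          (∀ x, f x ∈ Set.Icc (0:ℝ) 1) →
          |a.sum (fun x c => c * f x) -
            (Finsupp.mapDomain (fun x => g * x) a).sum (fun x c => c * f x)| ≤ ε) :
    (∀ ε' > (0:ℝ), ∀ E : Finset G, ∀ d : G → G → ℝ, IsPseudoMetric d →
      (∀ g x y : G, d (x * g) (y * g) = d x y) →
      (∀ x : G, ∀ r > (0:ℝ), IsOpen {y : G | d x y < r}) →
      ∃ a : G →₀ ℝ, (∀ x, 0 ≤ a x) ∧ a.sum (fun _ c => c) = 1 ∧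
        ∀ g ∈ E, ∀ f : G → ℝ, (∀ x y, |f x - f y| ≤ d x y) →
          (∀ x, f x ∈ Set.Icc (0:ℝ) 1) →
          |a.sum (fun x c => c * f x) -
            (Finsupp.mapDomain (fun x => g * x) a).sum (fun x c => c * f x)| ≤ ε') ∧
    TopAmenable G := by
  classical
  have hP : Stmt8.P G ε := h
  have hall := Stmt8.P_all hε hP
  exact ⟨fun ε' hε' => hall ε' hε', Stmt8.amenable (fun ε' hε' => hall ε' hε')⟩
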